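/- For every integer n ≥ 1, ⌊n!/e⌋ ≡ -δ_{n-1} (mod n), where δ_{n-1} = 0 if n-1 is odd and δ_{n-1} = 1 if n-1 is even. -/

import Mathlib

open Finset

private noncomputable def sFun : ℕ → ℝ :=
  fun n => ∑ k ∈ Finset.range n, (-1 : ℝ) ^ k * ((k.factorial : ℝ))⁻¹

private lemma sFun_tendsto :
    Filter.Tendsto (fun n => ∑ i ∈ Finset.range n, (-1 : ℝ) ^ i * ((i.factorial : ℝ))⁻¹)
      Filter.atTop (nhds (Real.exp (-1))) := by
  have h : HasSum (fun k : ℕ => (-1 : ℝ) ^ k / k.factorial) (Real.exp (-1)) := by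
    rw [Real.exp_eq_exp_ℝ]
    exact NormedSpace.expSeries_div_hasSum_exp (-1 : ℝ)
  simpa [div_eq_mul_inv] using h.tendsto_sum_nat

private lemma factInv_antitone : Antitone (fun k : ℕ => ((k.factorial : ℝ))⁻¹) := by
  intro a b hab
  have h1 : (0 : ℝ) < a.factorial := by positivity
  have h2 : (a.factorial : ℝ) ≤ b.factorial := by exact_mod_cast Nat.factorial_le hab
  exact inv_anti₀ h1 h2

private lemma sFun_le (k : ℕ) : sFun (2 * k) ≤ Real.exp (-1) :=
  Antitone.alternating_series_le_tendsto sFun_tendsto factInv_antitone k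

private lemma le_sFun (k : ℕ) : Real.exp (-1) ≤ sFun (2 * k + 1) :=
  Antitone.tendsto_le_alternating_series sFun_tendsto factInv_antitone k

private lemma numDerangements_div (n : ℕ) :
    (numDerangements n : ℝ) / n.factorial = sFun (n + 1) := by
  rw [← Int.cast_natCast, numDerangements_sum]
  push_cast
  rw [Finset.sum_div]
  refine Finset.sum_congr (refl _) ?_
  intro k hk
  have h_le : k ≤ n := Finset.mem_range_succ_iff.mp hk
  rw [Nat.ascFactorial_eq_div, add_tsub_cancel_of_le h_le]
  push_cast [Nat.factorial_dvd_factorial h_le]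
  field_simp [Nat.factorial_ne_zero]

theorem floor_factorial_div_e_congr (n : ℕ) (hn : 1 ≤ n) :
    ⌊(n.factorial : ℝ) / Real.exp 1⌋ ≡ -(if Even (n - 1) then 1 else 0) [ZMOD n] := by
  obtain ⟨m, rfl⟩ : ∃ m, n = m + 1 := ⟨n - 1, by omega⟩
  set n := m + 1 with hn_def
  have hfact_pos : (0 : ℝ) < n.factorial := by positivity
  have hD : (numDerangements n : ℝ) = n.factorial * sFun (n + 1) := by
    have h := numDerangements_div n
    field_simp at h
    linarith [h]
  have hx : (n.factorial : ℝ) / Real.exp 1 = (n.factorial : ℝ) * Real.exp (-1) := by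
    rw [Real.exp_neg, div_eq_mul_inv]
  have e1 : sFun (n + 2) = sFun (n + 1) + (-1 : ℝ) ^ (n + 1) * (((n + 1).factorial : ℝ))⁻¹ := by
    simp [sFun, Finset.sum_range_succ]
  have e2 : sFun (n + 3) = sFun (n + 2) + (-1 : ℝ) ^ (n + 2) * (((n + 2).factorial : ℝ))⁻¹ := by
    rw [show n + 3 = (n + 2) + 1 by ring]
    simp [sFun, Finset.sum_range_succ]
  have hinv1 : (0 : ℝ) < (((n + 1).factorial : ℝ))⁻¹ := by positivity
  have hinv2lt : (((n + 2).factorial : ℝ))⁻¹ < (((n + 1).factorial : ℝ))⁻¹ := by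
    apply inv_strictAnti₀ (by positivity)
    exact_mod_cast (Nat.factorial_lt (by omega)).mpr (by omega)
  have hfle : (n.factorial : ℝ) * (((n + 1).factorial : ℝ))⁻¹ < 1 := by
    rw [mul_inv_lt_iff₀' (by positivity), mul_one]
    exact_mod_cast (Nat.factorial_lt (by omega)).mpr (by omega)
  have key : ⌊(n.factorial : ℝ) / Real.exp 1⌋ =
      (numDerangements n : ℤ) - (if Even n then 1 else 0) := by
    rw [hx, Int.floor_eq_iff]
    rcases Nat.even_or_odd n with he | ho
    · obtain ⟨k, hk⟩ := he
      rw [if_pos ⟨k, hk⟩]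
      have hlow : sFun (n + 2) ≤ Real.exp (-1) := by
        have := sFun_le (k + 1); rwa [show 2 * (k + 1) = n + 2 by omega] at this
      have hup : Real.exp (-1) ≤ sFun (n + 3) := by
        have := le_sFun (k + 1); rwa [show 2 * (k + 1) + 1 = n + 3 by omega] at this
      have hpar1 : (-1 : ℝ) ^ (n + 1) = -1 := Odd.neg_one_pow ⟨k, by omega⟩
      have hpar2 : (-1 : ℝ) ^ (n + 2) = 1 := Even.neg_one_pow ⟨k + 1, by omega⟩
      rw [hpar1] at e1; rw [hpar2] at e2
      constructor
      · push_cast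
        nlinarith [mul_le_mul_of_nonneg_left hlow hfact_pos.le]
      · push_cast
        nlinarith [mul_le_mul_of_nonneg_left hup hfact_pos.le,
          mul_lt_mul_of_pos_left hinv2lt hfact_pos]
    · obtain ⟨k, hk⟩ := ho
      rw [if_neg (by simp [hk, parity_simps])]
      have hlow : sFun (n + 1) ≤ Real.exp (-1) := by
        have := sFun_le (k + 1); rwa [show 2 * (k + 1) = n + 1 by omega] at this
      have hup : Real.exp (-1) ≤ sFun (n + 2) := by
        have := le_sFun (k + 1); rwa [show 2 * (k + 1) + 1 = n + 2 by omega] at this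
      have hpar1 : (-1 : ℝ) ^ (n + 1) = 1 := Even.neg_one_pow ⟨k + 1, by omega⟩
      rw [hpar1] at e1
      constructor
      · push_cast
        nlinarith [mul_le_mul_of_nonneg_left hlow hfact_pos.le]
      · push_cast
        nlinarith [mul_le_mul_of_nonneg_left hup hfact_pos.le]
  rw [key]
  have hrec := numDerangements_succ m
  rcases Nat.even_or_odd m with hme | hmo
  · -- m even, n odd
    have hno : ¬ Even n := by simp [hn_def, parity_simps, hme]
    have hm1 : Even (n - 1) := by simpa [hn_def] using hme
    rw [if_neg hno, if_pos hm1]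
    refine Int.ModEq.symm (Int.modEq_iff_dvd.mpr ⟨(numDerangements m : ℤ), ?_⟩)
    rw [sub_zero, hrec, Even.neg_one_pow hme]
    push_cast
    rw [hn_def]; push_cast; ring
  · -- m odd, n even
    have hne : Even n := by simpa [hn_def, parity_simps] using hmo
    have hm1 : ¬ Even (n - 1) := by simpa [hn_def] using hmo
    rw [if_pos hne, if_neg hm1]
    refine Int.ModEq.symm (Int.modEq_iff_dvd.mpr ⟨(numDerangements m : ℤ), ?_⟩)
    rw [hrec, Odd.neg_one_pow hmo]
    push_cast
    rw [hn_def]; push_cast; ring
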